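/- arXiv:math/0411180 — 10 statements merged into one kernel-verified Lean document; each statement's English description precedes it below -/
import Mathlib

section
/- Let (n_k)_{k ∈ ℤ} be a non-decreasing variable-r meta-Fibonacci sequence with n_k = 1 for all k ≤ 0. Suppose that every cascade has length at most J, i.e., there is no index k ≥ 1 with n_k = n_{k+1} = ... = n_{k+J}. Then n_k ≥ 2^{⌊k/(J+2)⌋} for every k ≥ 1. -/
/-- For a non-decreasing variable-r meta-Fibonacci sequence with
`n k = 1` for `k ≤ 0`, if there is no `k ≥ 1` with `n k = n (k+1) = ... = n (k+J)`
(every cascade has length at most `J`), then `n k ≥ 2 ^ ⌊k/(J+2)⌋` for every `k ≥ 1`. -/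
theorem stmt_4 (n : ℤ → ℤ) (r : ℤ → ℤ)
    (hr : ∀ k, 1 ≤ r k)
    (hrec : ∀ k : ℤ, n k = ∑ j ∈ Finset.Icc (1 : ℤ) (r k), n (k - j))
    (hmono : ∀ k : ℤ, n (k - 1) ≤ n k)
    (hinit : ∀ k ≤ (0 : ℤ), n k = 1)
    (J : ℤ) (hJ : 1 ≤ J)
    (hcasc : ¬ ∃ k ≥ (1 : ℤ), ∀ i : ℤ, 0 ≤ i → i ≤ J → n (k + i) = n k) :
    ∀ k ≥ (1 : ℤ), 2 ^ (k / (J + 2)).toNat ≤ n k := by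
  -- monotonicity over intervals
  have mono : ∀ a b : ℤ, a ≤ b → n a ≤ n b := by
    intro a b hab
    refine Int.le_induction (motive := fun b _ => n a ≤ n b) (le_refl _) (fun b hb ih => ?_) b hab
    have := hmono (b + 1)
    simp only [add_sub_cancel_right] at this
    exact ih.trans this
  -- positivity
  have pos : ∀ k : ℤ, 1 ≤ n k := by
    intro k
    rcases le_or_gt k 0 with h | h
    · rw [hinit k h]
    · calc (1 : ℤ) = n 0 := (hinit 0 le_rfl).symm
        _ ≤ n k := mono 0 k h.le
  -- first strict increase
  have firstinc : ∀ a b : ℤ, a ≤ b → n a < n b →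
      ∃ m, a < m ∧ m ≤ b ∧ n (m - 1) < n m := by
    intro a b hab
    refine Int.le_induction (motive := fun b _ => n a < n b → ∃ m, a < m ∧ m ≤ b ∧ n (m - 1) < n m) (fun h => absurd h (lt_irrefl _)) (fun b hb ih => ?_) b hab
    intro h
    rcases lt_or_ge (n a) (n b) with h' | h'
    · obtain ⟨m, h1, h2, h3⟩ := ih h'
      exact ⟨m, h1, h2.trans (by linarith), h3⟩
    · refine ⟨b + 1, by linarith, le_rfl, ?_⟩
      have e : b + 1 - 1 = b := by ring
      rw [e]
      exact lt_of_le_of_lt h' h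
  push_neg at hcasc
  -- doubling lemma
  have double : ∀ k : ℤ, 0 ≤ k → 2 * n k ≤ n (k + (J + 2)) := by
    intro k hk
    obtain ⟨i, hi0, hiJ, hne⟩ := hcasc (k + 1) (by linarith)
    have hlt : n (k + 1) < n (k + 1 + i) :=
      lt_of_le_of_ne (mono _ _ (by linarith)) (Ne.symm hne)
    obtain ⟨m, hm1, hm2, hm3⟩ := firstinc (k + 1) (k + 1 + i) (by linarith) hlt
    have hr2 : 2 ≤ r m := by
      by_contra h
      have hr1 : r m = 1 := le_antisymm (by linarith) (hr m)
      have : n m = n (m - 1) := by rw [hrec m, hr1]; simp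
      linarith
    have hsum : n (m - 1) + n (m - 2) ≤ n m := by
      rw [hrec m]
      have hsub : Finset.Icc (1 : ℤ) 2 ⊆ Finset.Icc 1 (r m) :=
        Finset.Icc_subset_Icc le_rfl hr2
      have e : ∑ j ∈ Finset.Icc (1 : ℤ) 2, n (m - j) = n (m - 1) + n (m - 2) := by
        rw [show Finset.Icc (1 : ℤ) 2 = {1, 2} by rfl]
        rw [Finset.sum_pair (by norm_num : (1 : ℤ) ≠ 2)]
      calc n (m - 1) + n (m - 2) = ∑ j ∈ Finset.Icc (1 : ℤ) 2, n (m - j) := e.symm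
        _ ≤ ∑ j ∈ Finset.Icc (1 : ℤ) (r m), n (m - j) :=
          Finset.sum_le_sum_of_subset_of_nonneg hsub
            (fun j _ _ => le_trans zero_le_one (pos _))
    have h1 : n k ≤ n (m - 2) := mono _ _ (by linarith)
    have h2 : n k ≤ n (m - 1) := mono _ _ (by linarith)
    have h3 : n m ≤ n (k + (J + 2)) := mono _ _ (by linarith)
    linarith
  -- main strong induction
  have main : ∀ t : ℕ, ∀ k : ℤ, 1 ≤ k → k ≤ (t : ℤ) → 2 ^ (k / (J + 2)).toNat ≤ n k := by
    intro t
    induction t with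
    | zero => intro k h1 h2; exfalso; omega
    | succ t ih =>
      intro k h1 h2
      rcases lt_or_ge k (J + 2) with hk | hk
      · have hdiv : k / (J + 2) = 0 := Int.ediv_eq_zero_of_lt (by linarith) hk
        rw [hdiv]
        simpa using pos k
      · set k' := k - (J + 2) with hk'
        have hk'0 : 0 ≤ k' := by omega
        have hd : 2 * n k' ≤ n k := by
          have := double k' hk'0
          have e : k' + (J + 2) = k := by omega
          rwa [e] at this
        have hnk' : 2 ^ (k' / (J + 2)).toNat ≤ n k' := by
          rcases hk'0.eq_or_lt with h0 | h0
          · rw [← h0]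
            norm_num [hinit 0 le_rfl]
          · exact ih k' h0 (by omega)
        have hdivk : (k / (J + 2)).toNat = (k' / (J + 2)).toNat + 1 := by
          have e : k / (J + 2) = k' / (J + 2) + 1 := by
            rw [show k = k' + 1 * (J + 2) by omega]
            exact Int.add_mul_ediv_right _ _ (by linarith)
          have nn : 0 ≤ k' / (J + 2) := Int.ediv_nonneg hk'0 (by linarith)
          omega
        rw [hdivk, pow_succ]
        linarith
  intro k hk
  exact main k.toNat k hk (by omega)
end

section
/- Define r : ℤ → ℤ⁺ by r(k) = 2 if k ≥ 2 and k is a power of 2, and r(k) = 1 otherwise (for k ≥ 1), with r(k) = 1 for k ≤ 0. Let (n_k) be the variable-r meta-Fibonacci sequence generated by r with n_k = 1 for k ≤ 0. Then k/2 < n_k ≤ k for all k ≥ 1. -/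
/-- With `r k = 2` when `k ≥ 2` is a power of 2 and `r k = 1` otherwise,
the variable-r meta-Fibonacci sequence with `n k = 1` for `k ≤ 0` satisfies
`k/2 < n k ≤ k` for all `k ≥ 1`. -/
theorem stmt_5 (n : ℤ → ℤ) (r : ℤ → ℤ)
    (hr2 : ∀ k : ℤ, (2 ≤ k ∧ ∃ m : ℕ, k = 2 ^ m) → r k = 2)
    (hr1 : ∀ k : ℤ, ¬(2 ≤ k ∧ ∃ m : ℕ, k = 2 ^ m) → r k = 1)
    (hrec : ∀ k : ℤ, n k = ∑ j ∈ Finset.Icc (1 : ℤ) (r k), n (k - j))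
    (hinit : ∀ k ≤ (0 : ℤ), n k = 1) :
    ∀ k ≥ (1 : ℤ), k < 2 * n k ∧ n k ≤ k := by
  have icc1 : Finset.Icc (1 : ℤ) 1 = {1} := by decide
  have icc2 : Finset.Icc (1 : ℤ) 2 = {1, 2} := by decide
  have key : ∀ N : ℕ, 1 ≤ N → n N = 2 ^ Nat.log 2 N := by
    intro N
    induction N using Nat.strong_induction_on with
    | _ N ih =>
      intro hN1
      rcases eq_or_lt_of_le hN1 with h1 | h2
      · -- N = 1
        rw [← h1]
        have hr : r 1 = 1 := hr1 1 (by omega)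
        have := hrec 1
        rw [hr, icc1] at this
        simp at this
        norm_num
        rw [this, hinit 0 le_rfl]
      · -- N ≥ 2
        have hN2 : 2 ≤ N := h2
        by_cases hpow : ∃ m : ℕ, N = 2 ^ m
        · obtain ⟨m, hm⟩ := hpow
          have hm1 : 1 ≤ m := by
            by_contra h
            have hm0 : m = 0 := by omega
            subst hm0
            simp at hm
            omega
          have hr : r N = 2 := hr2 N ⟨by omega, ⟨m, by rw [hm]; push_cast; ring⟩⟩
          have hsum := hrec N
          rw [hr, icc2] at hsum
          rw [Finset.sum_insert (by decide), Finset.sum_singleton] at hsum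
          have hlog : Nat.log 2 N = m := by rw [hm]; exact Nat.log_pow one_lt_two m
          rcases eq_or_lt_of_le hm1 with hm1' | hm2
          · -- m = 1, N = 2
            subst hm1'
            norm_num at hm hlog
            subst hm
            have hn1 : n 1 = 1 := by
              have hr' : r 1 = 1 := hr1 1 (by omega)
              have := hrec 1
              rw [hr', icc1] at this
              simp at this
              rw [this, hinit 0 le_rfl]
            have hn0 : n 0 = 1 := hinit 0 le_rfl
            norm_num at hsum ⊢
            rw [hsum, hn1, hn0]
            norm_num
          · -- m ≥ 2
            have hm2' : 2 ≤ m := hm2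
            have h4 : 4 ≤ N := by
              rw [hm]
              calc (4:ℕ) = 2^2 := by norm_num
              _ ≤ 2^m := Nat.pow_le_pow_right (by norm_num) hm2'
            have e1 : ((N : ℤ) - 1) = ((N - 1 : ℕ) : ℤ) := by push_cast [Nat.cast_sub (by omega : 1 ≤ N)]; ring
            have e2 : ((N : ℤ) - 2) = ((N - 2 : ℕ) : ℤ) := by push_cast [Nat.cast_sub (by omega : 2 ≤ N)]; ring
            have hlog1 : Nat.log 2 (N - 1) = m - 1 := by
              apply Nat.log_eq_of_pow_le_of_lt_pow
              · have : 2 ^ (m-1) ≤ 2^m - 2 := by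
                  have : 2 ^ m = 2 * 2 ^ (m-1) := by
                    rw [← pow_succ']
                    congr 1
                    omega
                  have h2m : 2 ≤ 2 ^ (m-1) := by
                    calc 2 = 2^1 := by norm_num
                    _ ≤ 2^(m-1) := Nat.pow_le_pow_right (by norm_num) (by omega)
                  omega
                omega
              · have : m - 1 + 1 = m := by omega
                rw [this]
                omega
            have hlog2 : Nat.log 2 (N - 2) = m - 1 := by
              apply Nat.log_eq_of_pow_le_of_lt_pow
              · have : 2 ^ (m-1) ≤ 2^m - 2 := by
                  have : 2 ^ m = 2 * 2 ^ (m-1) := by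
                    rw [← pow_succ']
                    congr 1
                    omega
                  have h2m : 2 ≤ 2 ^ (m-1) := by
                    calc 2 = 2^1 := by norm_num
                    _ ≤ 2^(m-1) := Nat.pow_le_pow_right (by norm_num) (by omega)
                  omega
                omega
              · have : m - 1 + 1 = m := by omega
                rw [this]
                omega
            have ih1 := ih (N - 1) (by omega) (by omega)
            have ih2 := ih (N - 2) (by omega) (by omega)
            rw [e1, e2] at hsum
            rw [hsum, ih1, ih2, hlog1, hlog2, hlog]
            obtain ⟨p, hp⟩ : ∃ p, m = p + 1 := ⟨m - 1, by omega⟩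
            subst hp
            simp only [Nat.add_sub_cancel]
            rw [pow_succ]
            ring
        · -- not a power of 2
          have hr : r N = 1 := by
            apply hr1
            rintro ⟨-, m, hm⟩
            exact hpow ⟨m, by exact_mod_cast hm⟩
          have hsum := hrec N
          rw [hr, icc1] at hsum
          simp only [Finset.sum_singleton] at hsum
          have e1 : ((N : ℤ) - 1) = ((N - 1 : ℕ) : ℤ) := by push_cast [Nat.cast_sub (by omega : 1 ≤ N)]; ring
          have ih1 := ih (N - 1) (by omega) (by omega)
          set l := Nat.log 2 N with hl
          have hle : 2 ^ l ≤ N := Nat.pow_log_le_self 2 (by omega)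
          have hlt : N < 2 ^ (l + 1) := Nat.lt_pow_succ_log_self (by norm_num) N
          have hne : N ≠ 2 ^ l := fun h => hpow ⟨l, h⟩
          have hlog1 : Nat.log 2 (N - 1) = l :=
            Nat.log_eq_of_pow_le_of_lt_pow (by omega) (by omega)
          rw [e1] at hsum
          rw [hsum, ih1, hlog1]
  intro k hk
  have hk0 : (0:ℤ) ≤ k := by omega
  obtain ⟨N, hN⟩ := Int.eq_ofNat_of_zero_le hk0
  have hN1 : 1 ≤ N := by omega
  have hkey := key N hN1
  rw [← hN] at hkey
  set l := Nat.log 2 N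
  have hle : 2 ^ l ≤ N := Nat.pow_log_le_self 2 (by omega)
  have hlt : N < 2 ^ (l + 1) := Nat.lt_pow_succ_log_self (by norm_num) N
  have hle' : (2:ℤ) ^ l ≤ k := by rw [hN]; exact_mod_cast hle
  have hlt' : k < 2 * 2 ^ l := by
    rw [hN]
    have : (N:ℤ) < 2 ^ (l+1) := by exact_mod_cast hlt
    rw [pow_succ] at this
    linarith
  constructor
  · rw [hkey]; linarith
  · rw [hkey]; linarith
end

section
/- Define r : ℤ → ℤ⁺ by r(k) = 2^{k-1} for k ≥ 1 and r(k) = 1 for k ≤ 0. Let (n_k) be the variable-r meta-Fibonacci sequence with n_k = 1 for all k ≤ 0. Then 2 < n_k / n_{k-1} < 3 for every k ≥ 3. -/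
/-- With `r k = 2^(k-1)` for `k ≥ 1` and `r k = 1` for `k ≤ 0`, the
variable-r meta-Fibonacci sequence with `n k = 1` for `k ≤ 0` satisfies
`2 < n k / n (k-1) < 3` for every `k ≥ 3`. -/
theorem stmt_6 (n : ℤ → ℝ) (r : ℤ → ℤ)
    (hr2 : ∀ k ≥ (1 : ℤ), r k = 2 ^ (k - 1).toNat)
    (hr1 : ∀ k ≤ (0 : ℤ), r k = 1)
    (hrec : ∀ k : ℤ, n k = ∑ j ∈ Finset.Icc (1 : ℤ) (r k), n (k - j))
    (hinit : ∀ k ≤ (0 : ℤ), n k = 1) :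
    ∀ k ≥ (3 : ℤ), 2 < n k / n (k - 1) ∧ n k / n (k - 1) < 3 := by
  have hIcc : ∀ x : ℤ, Finset.Icc (1:ℤ) x = Finset.Ioc 0 x := by
    intro x; ext j; simp [Finset.mem_Icc, Finset.mem_Ioc]; omega
  -- key recurrence
  have key : ∀ k : ℤ, 2 ≤ k → n k = 2 * n (k-1) + ((2:ℝ)^((k-2).toNat) - 1) := by
    intro k hk
    set a : ℕ := (k-2).toNat with ha
    have hka : k = (a:ℤ) + 2 := by omega
    have hak : ((a:ℤ)) < 2^a := by exact_mod_cast (Nat.lt_two_pow_self : a < 2^a)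
    have hS1 : (1:ℤ) ≤ 2^a := one_le_pow₀ (by norm_num)
    have hr : r k = 2^(a+1) := by
      have h' : (k-1).toNat = a+1 := by omega
      rw [hr2 k (by omega), h']
    have hrk1 : r (k-1) = 2^a := by
      have h' : (k-1-1).toNat = a := by omega
      rw [hr2 (k-1) (by omega), h']
    have h1 : n k = ∑ j ∈ Finset.Ioc (0:ℤ) (2^(a+1)), n (k-j) := by
      rw [hrec k, hr, hIcc]
    have hsum : ∀ b c : ℤ, 0 ≤ b → b ≤ c → (∑ j ∈ Finset.Ioc (0:ℤ) c, n (k-j))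
        = (∑ j ∈ Finset.Ioc (0:ℤ) b, n (k-j)) + ∑ j ∈ Finset.Ioc b c, n (k-j) := by
      intro b c hb hbc
      rw [← Finset.Ioc_union_Ioc_eq_Ioc hb hbc, Finset.sum_union]
      exact Finset.disjoint_left.mpr (by intro j hj hj'; simp [Finset.mem_Ioc] at hj hj'; omega)
    have t1 : (∑ j ∈ Finset.Ioc (0:ℤ) (2^a+1), n (k-j))
        = (∑ j ∈ Finset.Ioc (0:ℤ) 1, n (k-j))
        + (∑ j ∈ Finset.Ioc (1:ℤ) (2^a+1), n (k-j)) :=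
      hsum 1 (2^a+1) (by norm_num) (by linarith)
    have t2 : (∑ j ∈ Finset.Ioc (0:ℤ) (2^(a+1)), n (k-j))
        = (∑ j ∈ Finset.Ioc (0:ℤ) (2^a+1), n (k-j))
        + (∑ j ∈ Finset.Ioc ((2:ℤ)^a+1) (2^(a+1)), n (k-j)) :=
      hsum (2^a+1) (2^(a+1)) (by linarith) (by rw [pow_succ]; linarith)
    have e1 : (∑ j ∈ Finset.Ioc (0:ℤ) 1, n (k-j)) = n (k-1) := by
      have h : Finset.Ioc (0:ℤ) 1 = {1} := by ext j; simp [Finset.mem_Ioc]; omega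
      rw [h, Finset.sum_singleton]
    have e2 : (∑ j ∈ Finset.Ioc (1:ℤ) (2^a+1), n (k-j)) = n (k-1) := by
      have hmap : Finset.Ioc (1:ℤ) (2^a+1) = (Finset.Ioc (0:ℤ) (2^a)).map
          (addLeftEmbedding 1) := by
        rw [Finset.map_add_left_Ioc]; congr 1 <;> ring
      rw [hmap, Finset.sum_map, hrec (k-1), hrk1, hIcc]
      apply Finset.sum_congr rfl
      intro i _
      simp only [addLeftEmbedding_apply]
      ring_nf
    have e3 : (∑ j ∈ Finset.Ioc ((2:ℤ)^a+1) (2^(a+1)), n (k-j)) = (2:ℝ)^a - 1 := by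
      rw [Finset.sum_congr rfl (fun j hj => ?_), Finset.sum_const, nsmul_eq_mul, mul_one]
      · rw [Int.card_Ioc]
        have h : ((2:ℤ)^(a+1) - (2^a+1)) = 2^a - 1 := by rw [pow_succ]; ring
        rw [h]
        have h0 : (0:ℤ) ≤ 2^a - 1 := by linarith
        rw [show (((2^a - 1 : ℤ).toNat : ℝ)) = (((2^a - 1 : ℤ).toNat : ℤ) : ℝ) by push_cast; ring,
          Int.toNat_of_nonneg h0]
        push_cast; ring
      · simp only [Finset.mem_Ioc] at hj
        exact hinit _ (by omega)
    rw [h1, t2, t1, e1, e2, e3]; ring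
  -- value at 2
  have hn1 : n 1 = 1 := by
    have h : r 1 = 1 := by rw [hr2 1 (by norm_num)]; norm_num
    rw [hrec 1, h]
    simp [hinit 0 (by norm_num)]
  have hn2 : n 2 = 2 := by
    have h := key 2 (by norm_num)
    norm_num at h
    rw [h, hn1]; norm_num
  -- lower bound
  have lb : ∀ m : ℤ, 2 ≤ m → (2:ℝ)^((m-1).toNat) ≤ n m := by
    have base : (2:ℝ)^(((2:ℤ)-1).toNat) ≤ n 2 := by norm_num [hn2]
    have step : ∀ m : ℤ, 2 ≤ m → (2:ℝ)^((m-1).toNat) ≤ n m →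
        (2:ℝ)^((m+1-1).toNat) ≤ n (m+1) := by
      intro m hm ih
      have hkey := key (m+1) (by omega)
      have h1 : (m+1-1) = m := by ring
      have h2 : (m+1-2).toNat = (m-1).toNat := by omega
      rw [hkey, h1, h2]
      have h3 : m.toNat = (m-1).toNat + 1 := by omega
      rw [h3, pow_succ]
      have hone : (1:ℝ) ≤ (2:ℝ)^((m-1).toNat) := one_le_pow₀ (by norm_num)
      linarith
    exact fun m hm => Int.le_induction base step m hm
  intro k hk
  have hkey := key k (by omega)
  have hlb : (2:ℝ)^((k-1-1).toNat) ≤ n (k-1) := lb (k-1) (by omega)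
  have heq : (k-1-1).toNat = (k-2).toNat := by omega
  rw [heq] at hlb
  have hb1 : (2:ℝ) ≤ (2:ℝ)^((k-2).toNat) := by
    calc (2:ℝ) = 2^1 := by norm_num
    _ ≤ 2^((k-2).toNat) := by apply pow_le_pow_right₀ (by norm_num); omega
  have hpos : (0:ℝ) < n (k-1) := by linarith
  constructor
  · rw [lt_div_iff₀ hpos]; linarith
  · rw [div_lt_iff₀ hpos]; linarith
end

section
/- Let (T, F) be a tree with dynamics with H ≥ 1 (F(T_l) = T_{l-H}). Let (x_{l(k)})_{k ∈ ℤ} be a return chain of an extended end x with return times (n_k)_{k ∈ ℤ}. Then (n_k) is a non-decreasing sequence: n_{k-1} ≤ n_k for all k. -/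
/-- An extended end of a genealogical tree with levels. -/
def IsEnd {V : Type*} (parent : V → V) (level : V → ℤ) (x : ℤ → V) : Prop :=
  ∀ l : ℤ, level (x l) = l ∧ x (l - 1) = parent (x l)

/-- `F^[n] (x l)` returns to the extended end `x`. -/
def Returns {V : Type*} (F : V → V) (x : ℤ → V) (l : ℤ) (n : ℕ) : Prop :=
  1 ≤ n ∧ ∃ m : ℤ, F^[n] (x l) = x m

/-- `n` is the first return time of `x l` to the extended end `x`. -/
def IsFirstReturnTime {V : Type*} (F : V → V) (x : ℤ → V) (l : ℤ) (n : ℕ) : Prop :=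
  Returns F x l n ∧ ∀ n' : ℕ, Returns F x l n' → n ≤ n'

/-- A return chain `(x (l k))` of the extended end `x`, with return times `(n k)`:
`n k` is the first return time of `x (l k)` and `F^[n k] (x (l k)) = x (l (k-1))`. -/
def IsReturnChain {V : Type*} (F : V → V) (x : ℤ → V) (l : ℤ → ℤ) (n : ℤ → ℕ) : Prop :=
  ∀ k : ℤ, IsFirstReturnTime F x (l k) (n k) ∧ F^[n k] (x (l k)) = x (l (k - 1))

/-- Return times of a return chain are non-decreasing. -/
theorem stmt_9 (V : Type*) (parent : V → V) (level : V → ℤ)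
    (hpl : ∀ v, level (parent v) = level v - 1)
    (F : V → V) (hF : ∀ v, F (parent v) = parent (F v))
    (H : ℤ) (hH : 1 ≤ H) (hFlev : ∀ v, level (F v) = level v - H)
    (x : ℤ → V) (hx : IsEnd parent level x)
    (l : ℤ → ℤ) (hl : StrictMono l) (n : ℤ → ℕ)
    (hchain : IsReturnChain F x l n) :
    ∀ k : ℤ, n (k - 1) ≤ n k := by
  -- F semiconjugates with parent, hence with iterates of parent
  have hcomm : ∀ (m : ℕ) (v : V), F^[m] (parent v) = parent (F^[m] v) := by
    intro m
    induction m with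
    | zero => intro v; simp
    | succ m ih =>
      intro v
      rw [Function.iterate_succ_apply, hF, ih, Function.iterate_succ_apply]
  have hcomm2 : ∀ (m d : ℕ) (v : V), F^[m] (parent^[d] v) = parent^[d] (F^[m] v) := by
    intro m d
    induction d with
    | zero => intro v; simp
    | succ d ih =>
      intro v
      rw [Function.iterate_succ_apply', hcomm, ih, Function.iterate_succ_apply']
  -- descending along the end
  have hdesc : ∀ (d : ℕ) (L : ℤ), x (L - d) = parent^[d] (x L) := by
    intro d
    induction d with
    | zero => intro L; simp
    | succ d ih =>
      intro L
      have h1 : (L : ℤ) - (d + 1 : ℕ) = (L - d) - 1 := by push_cast; ring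
      rw [h1, (hx (L - d)).2, ih, Function.iterate_succ_apply']
  intro k
  obtain ⟨⟨hret, hmin⟩, heq⟩ := hchain k
  obtain ⟨⟨hret', hmin'⟩, heq'⟩ := hchain (k - 1)
  -- show that n k is a return time of x (l (k-1))
  apply hmin'
  refine ⟨hret.1, ?_⟩
  have hlt : l (k - 1) < l k := hl (by omega)
  set d : ℕ := (l k - l (k - 1)).toNat with hd
  have hdL : l (k - 1) = l k - d := by
    have : (d : ℤ) = l k - l (k - 1) := Int.toNat_of_nonneg (by omega)
    omega
  refine ⟨l (k - 1) - d, ?_⟩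
  rw [hdL, hdesc d (l k), hcomm2, heq, ← hdesc d (l (k - 1)), hdL]
end

section
/- Let (T, F) be a tree with dynamics with H ≥ 1. Let (x_{l(k)})_{k ∈ ℤ} be a return chain of an extended end x, with return times (n_k)_{k ∈ ℤ}. Then (n_k) is an extended variable-r meta-Fibonacci sequence: for every k ∈ ℤ there exists r(k) ≥ 1 such that n_k = n_{k-1} + n_{k-2} + ... + n_{k-r(k)}. -/
section Aux

variable {V : Type*} (parent : V → V) (level : V → ℤ) (F : V → V) (x : ℤ → V)

lemma parent_iter_end (hx : IsEnd parent level x) :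
    ∀ (d : ℕ) (a : ℤ), parent^[d] (x a) = x (a - d) := by
  intro d
  induction d with
  | zero => intro a; simp
  | succ d ih =>
    intro a
    rw [Function.iterate_succ_apply, ← (hx a).2, ih]
    ring_nf
    congr 1
    push_cast
    ring

lemma F_iter_parent (hF : ∀ v, F (parent v) = parent (F v)) :
    ∀ (m d : ℕ) (v : V), F^[m] (parent^[d] v) = parent^[d] (F^[m] v) := by
  have hc : Function.Commute F parent := fun v => hF v
  intro m d v
  exact ((hc.iterate_right d).iterate_left m) v

lemma level_iter (hFlev : ∀ v, level (F v) = level v - H) :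
    ∀ (m : ℕ) (v : V), level (F^[m] v) = level v - m * H := by
  intro m
  induction m with
  | zero => intro v; simp
  | succ m ih =>
    intro v
    rw [Function.iterate_succ_apply', hFlev, ih]
    push_cast
    ring

end Aux

/-- Key lemma: any return time of `x (l k)` is a sum `n k + n (k-1) + ⋯`. -/
lemma key {V : Type*} {parent : V → V} {level : V → ℤ}
    {F : V → V} (hF : ∀ v, F (parent v) = parent (F v))
    {H : ℤ} (hH : 1 ≤ H) (hFlev : ∀ v, level (F v) = level v - H)
    {x : ℤ → V} (hx : IsEnd parent level x)
    {l : ℤ → ℤ} {n : ℤ → ℕ} (hchain : IsReturnChain F x l n) :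
    ∀ (m : ℕ) (k : ℤ), Returns F x (l k) m →
      ∃ r : ℕ, 1 ≤ r ∧ (m : ℤ) = ∑ j ∈ Finset.range r, (n (k - j) : ℤ) := by
  intro m
  induction m using Nat.strong_induction_on with
  | _ m ih =>
    intro k hret
    obtain ⟨⟨hret1, hmin⟩, hland⟩ := hchain k
    have hnk1 : 1 ≤ n k := hret1.1
    have hle : n k ≤ m := hmin m hret
    rcases eq_or_lt_of_le hle with heq | hlt
    · exact ⟨1, le_refl 1, by simp [← heq]⟩
    · -- m > n k : look at the remainder
      obtain ⟨hm1, a, ha⟩ := hret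
      have hsplit : F^[m - n k] (x (l (k - 1))) = x a := by
        rw [← hland, ← Function.iterate_add_apply, Nat.sub_add_cancel hle, ha]
      have hret' : Returns F x (l (k - 1)) (m - n k) :=
        ⟨by omega, a, hsplit⟩
      obtain ⟨r, hr1, hsum⟩ := ih (m - n k) (by omega) (k - 1) hret'
      refine ⟨r + 1, by omega, ?_⟩
      rw [Finset.sum_range_succ']
      have : ∀ i : ℕ, (k - (↑(i + 1) : ℤ)) = k - 1 - i := by intro i; push_cast; ring
      simp only [this, Nat.cast_zero, sub_zero]
      rw [← hsum]
      omega

/-- The return times of any return chain form an extended variable-r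
meta-Fibonacci sequence: for every `k` there is `r k ≥ 1` with
`n k = n (k-1) + ... + n (k - r k)`. -/
theorem stmt_10 (V : Type*) (parent : V → V) (level : V → ℤ)
    (hpl : ∀ v, level (parent v) = level v - 1)
    (F : V → V) (hF : ∀ v, F (parent v) = parent (F v))
    (H : ℤ) (hH : 1 ≤ H) (hFlev : ∀ v, level (F v) = level v - H)
    (x : ℤ → V) (hx : IsEnd parent level x)
    (l : ℤ → ℤ) (n : ℤ → ℕ)
    (hchain : IsReturnChain F x l n) :
    ∀ k : ℤ, ∃ r : ℤ, 1 ≤ r ∧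
      (n k : ℤ) = ∑ j ∈ Finset.Icc (1 : ℤ) r, (n (k - j) : ℤ) := by
  intro k
  obtain ⟨⟨⟨hnk1, -⟩, -⟩, hland⟩ := hchain k
  -- level of landing point : l (k-1) = l k - n k * H
  have hlev : l (k - 1) = l k - (n k : ℤ) * H := by
    have h1 := level_iter level F hFlev (n k) (x (l k))
    rw [hland, (hx (l (k-1))).1, (hx (l k)).1] at h1
    exact h1
  -- x (l (k-1)) is an ancestor of x (l k)
  set d : ℕ := ((n k : ℤ) * H).toNat with hd
  have hdcast : (d : ℤ) = (n k : ℤ) * H := by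
    rw [hd, Int.toNat_of_nonneg]
    positivity
  have hanc : x (l (k - 1)) = parent^[d] (x (l k)) := by
    rw [parent_iter_end parent level x hx d (l k), hlev, hdcast]
  -- hence n k is a return time of x (l (k-1))
  have hret : Returns F x (l (k - 1)) (n k) := by
    refine ⟨hnk1, l (k - 1) - d, ?_⟩
    rw [hanc, F_iter_parent parent F hF (n k) d, hland,
      parent_iter_end parent level x hx d]
  obtain ⟨r, hr1, hsum⟩ := key hF hH hFlev hx hchain (n k) (k - 1) hret
  refine ⟨r, by exact_mod_cast hr1, ?_⟩
  rw [hsum]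
  refine Finset.sum_nbij' (fun i => (i : ℤ) + 1) (fun j => (j - 1).toNat) ?_ ?_ ?_ ?_ ?_
  · intro i hi
    simp only [Finset.mem_range] at hi
    simp only [Finset.mem_Icc]
    omega
  · intro j hj
    simp only [Finset.mem_Icc] at hj
    simp only [Finset.mem_range]
    omega
  · intro i hi
    omega
  · intro j hj
    simp only [Finset.mem_Icc] at hj
    omega
  · intro i hi
    congr 1
    push_cast
    ring
end

section
/- Let (T, F) be a tree with dynamics with H ≥ 1, and let x = (x_l)_{l ∈ ℤ} be an extended end that is recurrent under F, meaning: for every L ∈ ℤ there exist K ∈ ℤ and N ≥ 1 with F^N(x_K) = x_L. Then for every L ∈ ℤ there exists M ∈ ℤ such that x_L is the first return of x_M, i.e., the first return time n of x_M satisfies F^n(x_M) = x_L. -/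
/-- If the extended end `x` is recurrent under `F`, then every vertex
`x L` of the end is the first return of some vertex `x M` of the end. -/
theorem stmt_11 (V : Type*) (parent : V → V) (level : V → ℤ)
    (hpl : ∀ v, level (parent v) = level v - 1)
    (F : V → V) (hF : ∀ v, F (parent v) = parent (F v))
    (H : ℤ) (hH : 1 ≤ H) (hFlev : ∀ v, level (F v) = level v - H)
    (x : ℤ → V) (hx : IsEnd parent level x)
    (hrec : ∀ L : ℤ, ∃ K : ℤ, ∃ N : ℕ, 1 ≤ N ∧ F^[N] (x K) = x L) :
    ∀ L : ℤ, ∃ M : ℤ, ∃ n : ℕ, IsFirstReturnTime F x M n ∧ F^[n] (x M) = x L := by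
  intro L
  have hP : ∃ N : ℕ, 1 ≤ N ∧ ∃ K : ℤ, F^[N] (x K) = x L := by
    obtain ⟨K, N, hN, hKN⟩ := hrec L
    exact ⟨N, hN, K, hKN⟩
  classical
  obtain ⟨h1, K, hK⟩ := Nat.find_spec hP
  refine ⟨K, Nat.find hP, ⟨⟨h1, L, hK⟩, ?_⟩, hK⟩
  rintro n' ⟨hn1, m, hm⟩
  by_contra hlt
  push_neg at hlt
  refine Nat.find_min hP (show Nat.find hP - n' < Nat.find hP by omega) ?_
  refine ⟨by omega, m, ?_⟩
  have : F^[Nat.find hP - n'] (F^[n'] (x K)) = x L := by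
    rw [← Function.iterate_add_apply]
    rw [show Nat.find hP - n' + n' = Nat.find hP by omega]
    exact hK
  rwa [hm] at this
end

section
/- Let (T, F) be a tree with dynamics with H ≥ 1, and let x be an extended end. If x is periodic with minimum period N (i.e., F^N(x) = x as an end and no smaller positive iterate fixes x), then there exists a return chain of x whose return times satisfy n_k = N for all sufficiently large k. -/
/-- If the extended end `x` is periodic with minimum period `N`, then
there exists a return chain of `x` whose return times are eventually equal to `N`. -/
theorem stmt_13 (V : Type*) (parent : V → V) (level : V → ℤ)
    (hpl : ∀ v, level (parent v) = level v - 1)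
    (F : V → V) (hF : ∀ v, F (parent v) = parent (F v))
    (H : ℤ) (hH : 1 ≤ H) (hFlev : ∀ v, level (F v) = level v - H)
    (x : ℤ → V) (hx : IsEnd parent level x)
    (N : ℕ) (hN : 1 ≤ N)
    (hper : ∀ l : ℤ, F^[N] (x l) = x (l - H * N))
    (hmin : ∀ N' : ℕ, 1 ≤ N' → (∀ l : ℤ, F^[N'] (x l) = x (l - H * N')) → N ≤ N') :
    ∃ (l : ℤ → ℤ) (n : ℤ → ℕ), IsReturnChain F x l n ∧
      ∃ K : ℤ, ∀ k ≥ K, n k = N := by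
  classical
  -- F iterates commute with parent
  have commIter : ∀ (n : ℕ) (v : V), F^[n] (parent v) = parent (F^[n] v) := by
    intro n
    induction n with
    | zero => intro v; simp
    | succ n ih =>
      intro v
      rw [Function.iterate_succ_apply, hF, ih, Function.iterate_succ_apply]
  -- level of iterates
  have levIter : ∀ (n : ℕ) (v : V), level (F^[n] v) = level v - H * n := by
    intro n
    induction n with
    | zero => intro v; simp
    | succ n ih =>
      intro v
      rw [Function.iterate_succ_apply, ih, hFlev]
      push_cast; ring
  -- one-step downward propagation of returns
  have hstep : ∀ (l : ℤ) (n : ℕ), F^[n] (x l) = x (l - H * n) →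
      F^[n] (x (l - 1)) = x (l - 1 - H * n) := by
    intro l n h
    have h2 := (hx (l - H * n)).2
    rw [(hx l).2, commIter, h, ← h2]
    ring_nf
  -- downward propagation
  have hdown : ∀ (l l' : ℤ), l' ≤ l → ∀ n : ℕ, F^[n] (x l) = x (l - H * n) →
      F^[n] (x l') = x (l' - H * n) := by
    intro l l' hl n h
    have key : ∀ d : ℕ, F^[n] (x (l - d)) = x (l - d - H * n) := by
      intro d
      induction d with
      | zero => simpa using h
      | succ d ih =>
        have := hstep (l - d) n ih
        have e : l - (d + 1 : ℕ) = l - d - 1 := by push_cast; ring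
        have e2 : l - (d + 1 : ℕ) - H * n = l - d - 1 - H * n := by push_cast; ring
        rw [e]
        exact this
    have : l' = l - ((l - l').toNat : ℤ) := by
      rw [Int.toNat_of_nonneg (by omega)]; ring
    rw [this]
    exact key _
  -- existence of return times
  have Ex : ∀ l : ℤ, ∃ n : ℕ, Returns F x l n := by
    intro l
    exact ⟨N, hN, l - H * N, hper l⟩
  set nf : ℤ → ℕ := fun l => Nat.find (Ex l) with hnf
  have nf_spec : ∀ l, Returns F x l (nf l) := fun l => Nat.find_spec (Ex l)
  have nf_min : ∀ l n', Returns F x l n' → nf l ≤ n' := fun l n' h => Nat.find_min' (Ex l) h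
  have nf_pos : ∀ l, 1 ≤ nf l := fun l => (nf_spec l).1
  have nf_le_N : ∀ l, nf l ≤ N := fun l => nf_min l N ⟨hN, l - H * N, hper l⟩
  -- the return equality for nf
  have nfeq : ∀ l, F^[nf l] (x l) = x (l - H * nf l) := by
    intro l
    obtain ⟨h1, m, hm⟩ := nf_spec l
    have : m = l - H * nf l := by
      have e1 := levIter (nf l) (x l)
      rw [hm, (hx m).1, (hx l).1] at e1
      exact e1
    rwa [this] at hm
  -- monotonicity of nf
  have nf_mono : ∀ l l' : ℤ, l' ≤ l → nf l' ≤ nf l := by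
    intro l l' hl
    exact nf_min l' (nf l) ⟨nf_pos l, l' - H * nf l, hdown l l' hl (nf l) (nfeq l)⟩
  -- supremum of nf is attained
  obtain ⟨L0, hL0⟩ : ∃ L0 : ℤ, nf L0 = sSup (Set.range nf) := by
    have h1 : (Set.range nf).Nonempty := ⟨nf 0, 0, rfl⟩
    have h2 : BddAbove (Set.range nf) := ⟨N, by rintro _ ⟨l, rfl⟩; exact nf_le_N l⟩
    obtain ⟨l, hl⟩ := Nat.sSup_mem h1 h2
    exact ⟨l, hl⟩
  have nf_le_M : ∀ l, nf l ≤ nf L0 := by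
    intro l
    rw [hL0]
    exact le_csSup ⟨N, by rintro _ ⟨l, rfl⟩; exact nf_le_N l⟩ ⟨l, rfl⟩
  have nf_const : ∀ l ≥ L0, nf l = nf L0 :=
    fun l hl => le_antisymm (nf_le_M l) (nf_mono l L0 hl)
  -- F^[nf L0] fixes the whole end, so nf L0 = N by minimality
  have hall : ∀ l : ℤ, F^[nf L0] (x l) = x (l - H * nf L0) := by
    intro l
    have h1 : nf (max l L0) = nf L0 := nf_const _ (le_max_right _ _)
    have := nfeq (max l L0)
    rw [h1] at this
    exact hdown (max l L0) l (le_max_left _ _) _ this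
  have hMN : nf L0 = N :=
    le_antisymm (nf_le_N L0) (hmin (nf L0) (nf_pos L0) hall)
  -- construct the chain
  set m : ℕ → ℤ := fun j => Nat.rec L0 (fun _ prev => prev - H * nf prev) j with hm
  have m_succ : ∀ j : ℕ, m (j + 1) = m j - H * nf (m j) := fun j => rfl
  set l : ℤ → ℤ := fun k => if 0 ≤ k then L0 + k * (H * N) else m (-k).toNat with hl
  refine ⟨l, fun k => nf (l k), ?_, 1, ?_⟩
  · intro k
    constructor
    · exact ⟨nf_spec (l k), fun n' h => nf_min (l k) n' h⟩
    · -- need l (k-1) = l k - H * nf (l k)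
      have key : l (k - 1) = l k - H * nf (l k) := by
        by_cases hk : 1 ≤ k
        · have hk0 : (0:ℤ) ≤ k := by omega
          have hk1 : (0:ℤ) ≤ k - 1 := by omega
          have hlk : l k = L0 + k * (H * N) := by simp [hl, hk0]
          have hge : l k ≥ L0 := by
            rw [hlk]
            have : (0:ℤ) ≤ k * (H * N) := by positivity
            omega
          have : nf (l k) = N := by rw [nf_const (l k) hge, hMN]
          rw [this]
          simp only [hl, if_pos hk0, if_pos hk1]
          ring
        · have hk0 : ¬ (0:ℤ) ≤ k - 1 := by omega
          have e1 : (-(k - 1)).toNat = (-k).toNat + 1 := by omega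
          have hlk : l k = m (-k).toNat := by
            by_cases h0 : k = 0
            · subst h0; simp [hl, hm]
            · have : ¬ (0:ℤ) ≤ k := by omega
              simp [hl, this]
          have hlk1 : l (k - 1) = m ((-k).toNat + 1) := by
            simp only [hl, if_neg hk0, e1]
          rw [hlk1, m_succ, ← hlk]
      rw [key]
      exact nfeq (l k)
  · intro k hk
    show nf (l k) = N
    have hk0 : (0:ℤ) ≤ k := by omega
    have hlk : l k = L0 + k * (H * N) := by simp [hl, hk0]
    have hge : l k ≥ L0 := by
      rw [hlk]
      have : (0:ℤ) ≤ k * (H * N) := by positivity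
      omega
    rw [nf_const (l k) hge, hMN]
end

section
/- Let (T, F) be a tree with dynamics with H ≥ 1 and let x be an extended end. If some return chain of x has return times (n_k) with n_k = N for all sufficiently large k, then every return chain of x has return times eventually equal to N, and x is periodic with minimum period N. -/
/-- If some return chain of the extended end `x` has return times
eventually equal to `N`, then every return chain of `x` has return times eventually
equal to `N`, and `x` is periodic with minimum period `N`. -/
theorem stmt_14 (V : Type*) (parent : V → V) (level : V → ℤ)
    (hpl : ∀ v, level (parent v) = level v - 1)
    (F : V → V) (hF : ∀ v, F (parent v) = parent (F v))
    (H : ℤ) (hH : 1 ≤ H) (hFlev : ∀ v, level (F v) = level v - H)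
    (x : ℤ → V) (hx : IsEnd parent level x)
    (N : ℕ)
    (l : ℤ → ℤ) (n : ℤ → ℕ) (hchain : IsReturnChain F x l n)
    (hev : ∃ K : ℤ, ∀ k ≥ K, n k = N) :
    (∀ (l' : ℤ → ℤ) (n' : ℤ → ℕ), IsReturnChain F x l' n' →
        ∃ K' : ℤ, ∀ k ≥ K', n' k = N) ∧
    (∀ m : ℤ, F^[N] (x m) = x (m - H * N)) ∧
    (∀ N' : ℕ, 1 ≤ N' → (∀ m : ℤ, F^[N'] (x m) = x (m - H * N')) → N ≤ N') := by
  obtain ⟨K, hK⟩ := hev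
  have hxlev : ∀ m : ℤ, level (x m) = m := fun m => (hx m).1
  have hpar : ∀ m : ℤ, x (m - 1) = parent (x m) := fun m => (hx m).2
  -- level of iterates
  have lev_iter : ∀ (nn : ℕ) (v : V), level (F^[nn] v) = level v - H * nn := by
    intro nn
    induction nn with
    | zero => simp
    | succ m ih =>
      intro v
      rw [Function.iterate_succ_apply', hFlev, ih]
      push_cast; ring
  -- parent iterates along the end
  have par_iter : ∀ (j : ℕ) (m : ℤ), x (m - j) = parent^[j] (x m) := by
    intro j
    induction j with
    | zero => simp
    | succ i ih =>
      intro m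
      rw [Function.iterate_succ_apply', ← ih]
      have : (m - (i + 1 : ℕ) : ℤ) = (m - i) - 1 := by push_cast; ring
      rw [this, hpar]
  -- iterates of F commute with iterates of parent
  have hc : Function.Commute F parent := fun v => hF v
  have Fpar : ∀ (nn j : ℕ) (v : V), F^[nn] (parent^[j] v) = parent^[j] (F^[nn] v) :=
    fun nn j v => (hc.iterate_iterate nn j) v
  -- if F^[nn] (x l) lands on the end, the landing point is determined by levels
  have returns_eq : ∀ (nn : ℕ) (m : ℤ), Returns F x m nn → F^[nn] (x m) = x (m - H * nn) := by
    intro nn m ⟨_, m', hm'⟩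
    have h1 := lev_iter nn (x m)
    rw [hm', hxlev, hxlev] at h1
    rw [hm', h1]
  -- returns propagate to lower levels
  have propag : ∀ (nn : ℕ) (lv m : ℤ), m ≤ lv →
      F^[nn] (x lv) = x (lv - H * nn) → F^[nn] (x m) = x (m - H * nn) := by
    intro nn lv m hm hret
    set j : ℕ := (lv - m).toNat with hj
    have hjz : (j : ℤ) = lv - m := Int.toNat_of_nonneg (by omega)
    have hxm : x m = parent^[j] (x lv) := by
      rw [← par_iter j lv]; congr 1; omega
    have hx2 : x (m - H * nn) = parent^[j] (x (lv - H * nn)) := by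
      rw [← par_iter j (lv - H * nn)]; congr 1; omega
    rw [hxm, Fpar, hret, hx2]
  have ret_mono : ∀ (nn : ℕ) (lv m : ℤ), m ≤ lv → Returns F x lv nn → Returns F x m nn := by
    intro nn lv m hm hret
    exact ⟨hret.1, m - H * nn, propag nn lv m hm (returns_eq nn lv hret)⟩
  -- chain level recurrence, for an arbitrary chain
  have chain_lev : ∀ (l' : ℤ → ℤ) (n' : ℤ → ℕ), IsReturnChain F x l' n' →
      ∀ k : ℤ, l' (k - 1) = l' k - H * n' k := by
    intro l' n' hch k
    have h1 := (hch k).2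
    have h2 := lev_iter (n' k) (x (l' k))
    rw [h1, hxlev, hxlev] at h2
    exact h2
  have chain_pos : ∀ (l' : ℤ → ℤ) (n' : ℤ → ℕ), IsReturnChain F x l' n' →
      ∀ k : ℤ, 1 ≤ n' k := fun l' n' hch k => (hch k).1.1.1
  -- growth of chain levels
  have growth : ∀ (l' : ℤ → ℤ) (n' : ℤ → ℕ), IsReturnChain F x l' n' →
      ∀ (k0 k : ℤ), k0 ≤ k → l' k0 + (k - k0) ≤ l' k := by
    intro l' n' hch k0 k hk
    have key : ∀ d : ℕ, l' k0 + d ≤ l' (k0 + d) := by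
      intro d
      induction d with
      | zero => simp
      | succ i ih =>
        have h1 : l' (k0 + i) = l' (k0 + i + 1) - H * n' (k0 + i + 1) := by
          have := chain_lev l' n' hch (k0 + i + 1); simpa using this
        have h2 : (1 : ℤ) ≤ H * n' (k0 + i + 1) := by
          have hn := chain_pos l' n' hch (k0 + i + 1)
          have : (1 : ℤ) ≤ (n' (k0 + i + 1) : ℤ) := by exact_mod_cast hn
          nlinarith
        have he : (k0 + ((i : ℤ) + 1)) = k0 + (i : ℤ) + 1 := by ring
        push_cast
        rw [he]
        omega
    have := key (k - k0).toNat
    have hz : ((k - k0).toNat : ℤ) = k - k0 := Int.toNat_of_nonneg (by omega)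
    rw [hz] at this
    simpa using this
  have hNpos : 1 ≤ N := by
    have := chain_pos l n hchain K
    rwa [hK K le_rfl] at this
  -- global periodicity
  have per : ∀ m : ℤ, F^[N] (x m) = x (m - H * N) := by
    intro m
    set k : ℤ := max K (m - l K + K) with hk
    have hkK : K ≤ k := le_max_left _ _
    have hlk : m ≤ l k := by
      have := growth l n hchain K k hkK
      have : l K + (k - K) ≤ l k := this
      omega
    have hnk : n k = N := hK k hkK
    have hret : F^[N] (x (l k)) = x (l k - H * N) := by
      have h1 := (hchain k).2
      have h2 := chain_lev l n hchain k
      rw [hnk] at h1 h2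
      rw [h1, h2]
    exact propag N (l k) m hlk hret
  refine ⟨?_, per, ?_⟩
  · -- every return chain eventually has return time N
    intro l' n' hch
    refine ⟨max 0 (l K - l' 0), fun k hk => ?_⟩
    have hk0 : (0 : ℤ) ≤ k := le_trans (le_max_left _ _) hk
    have hlk : l K ≤ l' k := by
      have := growth l' n' hch 0 k hk0
      have h2 : l K - l' 0 ≤ k := le_trans (le_max_right _ _) hk
      omega
    have h1 : n' k ≤ N := by
      apply (hch k).1.2
      exact ⟨hNpos, _, per (l' k)⟩
    have h2 : N ≤ n' k := by
      have hret : Returns F x (l K) (n' k) :=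
        ret_mono (n' k) (l' k) (l K) hlk (hch k).1.1
      have := (hchain K).1.2 (n' k) hret
      rwa [hK K le_rfl] at this
    omega
  · -- minimality
    intro N' hN' hp
    have hret : Returns F x (l K) N' := ⟨hN', l K - H * N', hp (l K)⟩
    have := (hchain K).1.2 N' hret
    rwa [hK K le_rfl] at this
end

section
/- Let (T, F) be a tree with dynamics with H ≥ 1 and let x be an extended end that is recurrent under F. Then for any L ∈ ℤ, x has a unique minimal return chain (x_{l(k)})_{k ∈ ℤ} with l(0) = L. -/
/-- A return chain is minimal if for every `k > 0`, `l k` is the least index whose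
first return is `x (l (k-1))`. -/
def IsMinimalChain {V : Type*} (F : V → V) (x : ℤ → V) (l : ℤ → ℤ) : Prop :=
  ∀ k : ℤ, 0 < k → ∀ l' : ℤ,
    (∃ n' : ℕ, IsFirstReturnTime F x l' n' ∧ F^[n'] (x l') = x (l (k - 1))) → l k ≤ l'

/-- If the extended end `x` is recurrent, then for any `L` there is a
unique minimal return chain of `x` with `l 0 = L`. -/
theorem stmt_15 (V : Type*) (parent : V → V) (level : V → ℤ)
    (hpl : ∀ v, level (parent v) = level v - 1)
    (F : V → V) (hF : ∀ v, F (parent v) = parent (F v))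
    (H : ℤ) (hH : 1 ≤ H) (hFlev : ∀ v, level (F v) = level v - H)
    (x : ℤ → V) (hx : IsEnd parent level x)
    (hrec : ∀ L : ℤ, ∃ K : ℤ, ∃ N : ℕ, 1 ≤ N ∧ F^[N] (x K) = x L) :
    ∀ L : ℤ, ∃! p : (ℤ → ℤ) × (ℤ → ℕ),
      IsReturnChain F x p.1 p.2 ∧ IsMinimalChain F x p.1 ∧ p.1 0 = L := by
  classical
  intro L
  have hxl : ∀ l : ℤ, level (x l) = l := fun l => (hx l).1
  have hxp : ∀ l : ℤ, x (l - 1) = parent (x l) := fun l => (hx l).2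
  -- level of iterates
  have hlevIter : ∀ (n : ℕ) (v : V), level (F^[n] v) = level v - n * H := by
    intro n
    induction n with
    | zero => intro v; simp
    | succ n ih =>
      intro v
      rw [Function.iterate_succ_apply', hFlev, ih]
      push_cast
      ring
  -- the target of a return is determined by levels
  have htarget : ∀ (n : ℕ) (a b : ℤ), F^[n] (x a) = x b → b = a - n * H := by
    intro n a b h
    have h2 := hlevIter n (x a)
    rw [h, hxl, hxl] at h2
    exact h2
  -- F commutes with parent on iterates
  have hparIter : ∀ (n : ℕ) (v : V), F^[n] (parent v) = parent (F^[n] v) := by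
    intro n
    induction n with
    | zero => intro v; simp
    | succ n ih =>
      intro v
      rw [Function.iterate_succ_apply, hF, ih, Function.iterate_succ_apply]
  -- returns pass down to ancestors
  have hanc : ∀ (n : ℕ) (a : ℤ) (j : ℕ), F^[n] (x a) = x (a - n * H) →
      F^[n] (x (a - j)) = x (a - j - n * H) := by
    intro n a j
    induction j with
    | zero => intro h; simpa using h
    | succ j ih =>
      intro h
      have h1 := ih h
      push_cast
      rw [show a - ((j : ℤ) + 1) = a - (j : ℤ) - 1 by ring]
      rw [show a - (j : ℤ) - 1 - (n : ℤ) * H = (a - (j : ℤ) - (n : ℤ) * H) - 1 by ring]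
      rw [hxp (a - (j : ℤ)), hxp (a - (j : ℤ) - (n : ℤ) * H), hparIter, h1]
  have hancle : ∀ (n : ℕ) (a b : ℤ), b ≤ a → F^[n] (x a) = x (a - n * H) →
      F^[n] (x b) = x (b - n * H) := by
    intro n a b hba h
    have hj : a - ((a - b).toNat : ℤ) = b := by omega
    have h2 := hanc n a (a - b).toNat h
    rw [hj] at h2
    exact h2
  -- characterization of Returns
  have hretIff : ∀ (l : ℤ) (n : ℕ), Returns F x l n ↔ (1 ≤ n ∧ F^[n] (x l) = x (l - n * H)) := by
    intro l n
    constructor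
    · rintro ⟨h1, m, hm⟩
      refine ⟨h1, ?_⟩
      rwa [htarget n l m hm] at hm
    · rintro ⟨h1, h2⟩
      exact ⟨h1, _, h2⟩
  -- every x l returns
  have hex : ∀ l : ℤ, ∃ n : ℕ, 1 ≤ n ∧ F^[n] (x l) = x (l - n * H) := by
    intro l
    obtain ⟨K, N, hN1, hKN⟩ := hrec l
    have hKl : l = K - N * H := htarget N K l hKN
    have hK : F^[N] (x K) = x (K - N * H) := by rwa [← hKl]
    have hN1' : (1 : ℤ) ≤ N := by exact_mod_cast hN1
    have hlK : l ≤ K := by nlinarith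
    exact ⟨N, hN1, hancle N K l hlK hK⟩
  -- first return times exist
  have hfrt_ex : ∀ l : ℤ, ∃ n : ℕ, IsFirstReturnTime F x l n := by
    intro l
    refine ⟨Nat.find (hex l), (hretIff l _).2 (Nat.find_spec (hex l)), ?_⟩
    intro n' hn'
    exact Nat.find_min' (hex l) ((hretIff l n').1 hn')
  choose nf hnf using hfrt_ex
  have hfrt_uniq : ∀ l n, IsFirstReturnTime F x l n → n = nf l :=
    fun l n hn => le_antisymm (hn.2 _ (hnf l).1) ((hnf l).2 _ hn.1)
  have hnf1 : ∀ l, 1 ≤ nf l := fun l => ((hretIff l _).1 (hnf l).1).1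
  have hfr : ∀ l, F^[nf l] (x l) = x (l - nf l * H) := fun l => ((hretIff l _).1 (hnf l).1).2
  -- every m is the first-return target of some l
  have hrange : ∀ m : ℤ, ∃ l : ℤ, l - (nf l : ℤ) * H = m := by
    intro m
    have hQ : ∃ N : ℕ, 1 ≤ N ∧ F^[N] (x (m + N * H)) = x m := by
      obtain ⟨K, N, hN1, hKN⟩ := hrec m
      have hmK : m = K - N * H := htarget N K m hKN
      refine ⟨N, hN1, ?_⟩
      rw [show m + (N : ℤ) * H = K by omega]
      exact hKN
    obtain ⟨hN1, hNspec⟩ := Nat.find_spec hQ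
    set N := Nat.find hQ with hNdef
    refine ⟨m + N * H, ?_⟩
    have hret : F^[N] (x (m + N * H)) = x ((m + N * H) - N * H) := by
      rw [show (m + (N : ℤ) * H) - N * H = m by ring]
      exact hNspec
    have hle : nf (m + N * H) ≤ N := (hnf _).2 N ((hretIff _ _).2 ⟨hN1, hret⟩)
    have hge : N ≤ nf (m + N * H) := by
      by_contra hlt
      push_neg at hlt
      set n := nf (m + (N : ℤ) * H) with hn_def
      have hn1 : 1 ≤ n := hnf1 _
      have hfn : F^[n] (x (m + N * H)) = x (m + N * H - n * H) := hfr _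
      have key : F^[N - n] (x (m + ((N - n : ℕ) : ℤ) * H)) = x m := by
        have h3 : F^[N - n] (F^[n] (x (m + N * H))) = x m := by
          rw [← Function.iterate_add_apply]
          rw [Nat.sub_add_cancel hlt.le]
          exact hNspec
        rw [hfn] at h3
        rw [show (m + ((N - n : ℕ) : ℤ) * H) = m + N * H - n * H by
          rw [Nat.cast_sub hlt.le]; ring]
        exact h3
      exact Nat.find_min hQ (show N - n < N by omega) ⟨by omega, key⟩
    have heq : nf (m + (N : ℤ) * H) = N := le_antisymm hle hge
    rw [heq]
    ring
  -- least element with given first-return target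
  have hgex : ∀ m : ℤ, ∃ gm : ℤ, (gm - (nf gm : ℤ) * H = m) ∧
      ∀ l', (l' - (nf l' : ℤ) * H = m) → gm ≤ l' := by
    intro m
    have hbdd : ∃ b : ℤ, ∀ z, (z - (nf z : ℤ) * H = m) → b ≤ z := by
      refine ⟨m + 1, fun z hz => ?_⟩
      have h1 : (1 : ℤ) ≤ nf z := by exact_mod_cast hnf1 z
      nlinarith
    obtain ⟨lb, h1, h2⟩ := Int.exists_least_of_bdd hbdd (hrange m)
    exact ⟨lb, h1, h2⟩
  choose g hg1 hg2 using hgex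
  -- construction of the chain function
  have hlfex : ∃ f : ℤ → ℤ, f 0 = L ∧ (∀ k : ℤ, k ≤ 0 → f (k - 1) = f k - nf (f k) * H) ∧
      (∀ k : ℤ, 0 < k → f k = g (f (k - 1))) := by
    set lp : ℕ → ℤ := fun j => Nat.rec L (fun _ prev => g prev) j with hlp
    set ln : ℕ → ℤ := fun j => Nat.rec L (fun _ prev => prev - nf prev * H) j with hln
    have hlp0 : lp 0 = L := rfl
    have hlps : ∀ j, lp (j + 1) = g (lp j) := fun j => rfl
    have hln0 : ln 0 = L := rfl
    have hlns : ∀ j, ln (j + 1) = ln j - nf (ln j) * H := fun j => rfl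
    refine ⟨fun k => if 0 ≤ k then lp k.toNat else ln (-k).toNat, ?_, ?_, ?_⟩
    · beta_reduce
      rw [if_pos (le_refl (0 : ℤ))]
      exact hlp0
    · intro k hk
      beta_reduce
      rcases eq_or_lt_of_le hk with hk0 | hk0
      · subst hk0
        rw [if_neg (show ¬ (0 : ℤ) ≤ 0 - 1 by omega), if_pos (le_refl (0 : ℤ))]
        rw [show ((-(0 - 1) : ℤ)).toNat = 1 by omega, show ((0 : ℤ)).toNat = 0 by omega, hlp0]
        have h4 := hlns 0
        rw [hln0] at h4
        exact h4
      · rw [if_neg (show ¬ (0 : ℤ) ≤ k - 1 by omega), if_neg (show ¬ (0 : ℤ) ≤ k by omega)]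
        rw [show ((-(k - 1) : ℤ)).toNat = (-k).toNat + 1 by omega]
    · intro k hk
      beta_reduce
      rw [if_pos (show (0 : ℤ) ≤ k by omega), if_pos (show (0 : ℤ) ≤ k - 1 by omega)]
      rw [show k.toNat = (k - 1).toNat + 1 by omega]
  obtain ⟨lf, hlf0, hlfneg, hlfpos⟩ := hlfex
  -- the chain is a return chain
  have hchain : IsReturnChain F x lf (fun k => nf (lf k)) := by
    intro k
    refine ⟨hnf (lf k), ?_⟩
    by_cases hk : k ≤ 0
    · rw [hlfneg k hk]
      exact hfr (lf k)
    · push_neg at hk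
      rw [hfr (lf k)]
      congr 1
      rw [hlfpos k hk]
      exact hg1 (lf (k - 1))
  -- the chain is minimal
  have hmin : IsMinimalChain F x lf := by
    rintro k hk l' ⟨n', hn', htar⟩
    have h1 : n' = nf l' := hfrt_uniq l' n' hn'
    have h2 : l' - (nf l' : ℤ) * H = lf (k - 1) := by
      have h3 := htarget n' l' (lf (k - 1)) htar
      rw [h1] at h3
      exact h3.symm
    rw [hlfpos k hk]
    exact hg2 (lf (k - 1)) l' h2
  -- backward determinism of return chains
  have hckey : ∀ (c : ℤ → ℤ) (m : ℤ → ℕ), IsReturnChain F x c m →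
      ∀ k : ℤ, c (k - 1) = c k - nf (c k) * H := by
    intro c m hc k
    have h1 : m k = nf (c k) := hfrt_uniq _ _ (hc k).1
    have h2 := htarget (m k) (c k) (c (k - 1)) (hc k).2
    rw [h1] at h2
    exact h2
  refine ⟨(lf, fun k => nf (lf k)), ⟨hchain, hmin, hlf0⟩, ?_⟩
  rintro ⟨c, m⟩ ⟨hpc, hpm, hp0⟩
  dsimp only at hpc hpm hp0 ⊢
  have heq : ∀ k : ℤ, c k = lf k := by
    intro k
    induction k using Int.induction_on with
    | zero => rw [hp0, hlf0]
    | succ i ih =>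
      have h1 : 0 < (i : ℤ) + 1 := by positivity
      have e1 : ((i : ℤ) + 1) - 1 = i := by ring
      have w1 : ∃ n', IsFirstReturnTime F x (c ((i : ℤ) + 1)) n' ∧
          F^[n'] (x (c ((i : ℤ) + 1))) = x (lf (((i : ℤ) + 1) - 1)) := by
        obtain ⟨ha, hb⟩ := hpc ((i : ℤ) + 1)
        refine ⟨m ((i : ℤ) + 1), ha, ?_⟩
        rw [hb]
        congr 1
        rw [e1, ih]
      have le1 : lf ((i : ℤ) + 1) ≤ c ((i : ℤ) + 1) := hmin ((i : ℤ) + 1) h1 _ w1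
      have w2 : ∃ n', IsFirstReturnTime F x (lf ((i : ℤ) + 1)) n' ∧
          F^[n'] (x (lf ((i : ℤ) + 1))) = x (c (((i : ℤ) + 1) - 1)) := by
        refine ⟨nf (lf ((i : ℤ) + 1)), hnf _, ?_⟩
        rw [(hchain ((i : ℤ) + 1)).2]
        congr 1
        rw [e1, ih]
      have le2 : c ((i : ℤ) + 1) ≤ lf ((i : ℤ) + 1) := hpm ((i : ℤ) + 1) h1 _ w2
      omega
    | pred i ih =>
      have e1 : (-(i : ℤ) - 1) = (-(i : ℤ)) - 1 := by ring
      rw [e1, hckey c m hpc (-(i : ℤ)), hckey lf (fun k => nf (lf k)) hchain (-(i : ℤ)), ih]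
  have hfun1 : c = lf := funext heq
  have hfun2 : m = fun k => nf (lf k) := by
    funext k
    rw [hfrt_uniq _ _ (hpc k).1, heq k]
  rw [hfun1, hfun2]
end

section
/- Fix a positive integer J. Define r : ℤ → ℤ⁺ by r(k) = 2 if k ≥ 1 and k ≡ 0 (mod J+2), and r(k) = 1 otherwise. Let (n_k)_{k ∈ ℤ} be the variable-r meta-Fibonacci sequence generated by r with n_k = 1 for k ≤ 0. Then for k ≥ 1, n_k = 2^{k/(J+2)} when (J+2) divides k, and n_k = n_{k-1} otherwise; in particular n_k = 2^{⌊k/(J+2)⌋} for all k ≥ 0, showing the lower bound n_k ≥ 2^{⌊k/(J+2)⌋} is sharp. -/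
lemma stmt19_key (m q t : ℤ) (hm : 0 < m) (h0 : 0 ≤ t) (h1 : t < m) :
    (t + q * m) / m = q := by
  rw [Int.add_mul_ediv_right _ _ (by omega : m ≠ 0),
    Int.ediv_eq_zero_of_lt h0 h1, zero_add]

/-- With `r k = 2` when `k ≥ 1` and `(J+2) ∣ k`, and `r k = 1` otherwise,
the variable-r meta-Fibonacci sequence with `n k = 1` for `k ≤ 0` satisfies:
for `k ≥ 1`, `n k = 2^(k/(J+2))` when `(J+2) ∣ k` and `n k = n (k-1)` otherwise;
in particular `n k = 2^⌊k/(J+2)⌋` for all `k ≥ 0`. -/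
theorem stmt_19 (J : ℤ) (hJ : 1 ≤ J) (n : ℤ → ℤ) (r : ℤ → ℤ)
    (hr2 : ∀ k : ℤ, 1 ≤ k → (J + 2) ∣ k → r k = 2)
    (hr1 : ∀ k : ℤ, ¬(1 ≤ k ∧ (J + 2) ∣ k) → r k = 1)
    (hrec : ∀ k : ℤ, n k = ∑ j ∈ Finset.Icc (1 : ℤ) (r k), n (k - j))
    (hinit : ∀ k ≤ (0 : ℤ), n k = 1) :
    (∀ k ≥ (1 : ℤ), ((J + 2) ∣ k → n k = 2 ^ (k / (J + 2)).toNat) ∧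
      (¬(J + 2) ∣ k → n k = n (k - 1))) ∧
    ∀ k ≥ (0 : ℤ), n k = 2 ^ (k / (J + 2)).toNat := by
  set m := J + 2 with hm
  have hm3 : 3 ≤ m := by omega
  have hm0 : 0 < m := by omega
  -- step for non-multiples
  have hstep1 : ∀ k : ℤ, ¬(1 ≤ k ∧ m ∣ k) → n k = n (k - 1) := by
    intro k hk
    rw [hrec k, hr1 k hk, Finset.Icc_self, Finset.sum_singleton]
  have hstep2 : ∀ k : ℤ, 1 ≤ k → m ∣ k → n k = n (k - 1) + n (k - 2) := by
    intro k hk1 hkd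
    rw [hrec k, hr2 k hk1 hkd]
    have h12 : Finset.Icc (1 : ℤ) 2 = {1, 2} := by
      ext a; simp [Finset.mem_Icc]; omega
    rw [h12, Finset.sum_insert (by decide), Finset.sum_singleton]
  have main : ∀ N : ℕ, n (N : ℤ) = 2 ^ (((N : ℤ) / m).toNat) := by
    intro N
    induction N using Nat.strong_induction_on with
    | _ N ih =>
      rcases Nat.eq_zero_or_pos N with h0 | hpos
      · subst h0
        simp [hinit 0 le_rfl]
      · set k : ℤ := (N : ℤ) with hk
        have hk1 : 1 ≤ k := by rw [hk]; exact_mod_cast hpos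
        by_cases hd : m ∣ k
        · obtain ⟨q, hq⟩ := hd
          have hq1 : 1 ≤ q := by nlinarith
          have hkm : m ≤ k := by nlinarith
          have e1 : (k - 1) / m = q - 1 := by
            have : k - 1 = (m - 1) + (q - 1) * m := by rw [hq]; ring
            rw [this, stmt19_key m (q-1) (m-1) hm0 (by omega) (by omega)]
          have e2 : (k - 2) / m = q - 1 := by
            have : k - 2 = (m - 2) + (q - 1) * m := by rw [hq]; ring
            rw [this, stmt19_key m (q-1) (m-2) hm0 (by omega) (by omega)]
          have e0 : k / m = q := by
            rw [hq, Int.mul_ediv_cancel_left _ (by omega : m ≠ 0)]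
          have hN1 : ((N - 1 : ℕ) : ℤ) = k - 1 := by
            push_cast [Nat.cast_sub (by omega : 1 ≤ N)]; ring
          have hN2 : ((N - 2 : ℕ) : ℤ) = k - 2 := by
            have hN3 : 3 ≤ N := by
              have : (3 : ℤ) ≤ k := le_trans hm3 hkm
              rw [hk] at this; exact_mod_cast this
            push_cast [Nat.cast_sub (by omega : 2 ≤ N)]; ring
          have i1 := ih (N - 1) (by omega)
          have i2 := ih (N - 2) (by omega)
          rw [hN1] at i1; rw [hN2] at i2
          rw [hstep2 k hk1 ⟨q, hq⟩, i1, i2, e1, e2, e0]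
          have : q.toNat = (q - 1).toNat + 1 := by omega
          rw [this, pow_succ]; ring
        · have hN1 : ((N - 1 : ℕ) : ℤ) = k - 1 := by
            push_cast [Nat.cast_sub (by omega : 1 ≤ N)]; ring
          have i1 := ih (N - 1) (by omega)
          rw [hN1] at i1
          have hs0 : 0 ≤ k % m := Int.emod_nonneg k (by omega)
          have hs1 : k % m < m := Int.emod_lt_of_pos k hm0
          have hsne : k % m ≠ 0 := fun h => hd (Int.dvd_of_emod_eq_zero h)
          have e1 : (k - 1) / m = k / m := by
            have : k - 1 = (k % m - 1) + (k / m) * m := by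
              have := Int.mul_ediv_add_emod k m; linarith
            rw [this, stmt19_key m (k / m) (k % m - 1) hm0 (by omega) (by omega)]
          rw [hstep1 k (fun h => hd h.2), i1, e1]
  have part2 : ∀ k ≥ (0 : ℤ), n k = 2 ^ (k / m).toNat := by
    intro k hk
    have := main k.toNat
    rwa [Int.toNat_of_nonneg hk] at this
  refine ⟨fun k hk => ⟨fun hd => part2 k (by omega), fun hd => hstep1 k (fun h => hd h.2)⟩, part2⟩
end
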